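/- arXiv:2509.16776 — 2 statements merged into one kernel-verified Lean document; each statement's English description precedes it below -/
import Mathlib

section
/- Let γ be the standard Gaussian measure on ℝ (gaussianReal 0 1), let g : ℝ → ℝ be differentiable with derivative g′ that is L-Lipschitz, let θ ∈ ℝ, and let μ > 0. Then the Gaussian-smoothed two-point gradient estimate satisfies the bias bound |∫ u, ((g(θ + μ·u) − g(θ − μ·u)) / (2μ)) · u ∂γ − g′(θ)| ≤ (L·μ/2) · ∫ u, |u|³ ∂γ. -/
open MeasureTheory ProbabilityTheory Real
open scoped NNReal ENNReal

section Aux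

/-- `∫ s in 0..c, |s| = c * |c| / 2`. -/
lemma aux_integral_abs (c : ℝ) : ∫ s in (0:ℝ)..c, |s| = c * |c| / 2 := by
  rcases le_total 0 c with h | h
  · have : Set.EqOn (fun s : ℝ => |s|) (fun s => s) (Set.uIcc 0 c) := by
      intro s hs
      rw [Set.uIcc_of_le h] at hs
      exact abs_of_nonneg hs.1
    rw [intervalIntegral.integral_congr this, integral_id, abs_of_nonneg h]
    ring
  · have : Set.EqOn (fun s : ℝ => |s|) (fun s => -s) (Set.uIcc 0 c) := by
      intro s hs
      rw [Set.uIcc_of_ge h] at hs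
      exact abs_of_nonpos hs.2
    rw [intervalIntegral.integral_congr this]
    rw [intervalIntegral.integral_neg]
    simp only [abs_of_nonpos h]
    rw [show (∫ s in (0:ℝ)..c, s) = (c ^ 2 - 0 ^ 2) / 2 from integral_id]
    ring

/-- Taylor bound for a function with Lipschitz derivative. -/
lemma aux_taylor (g g' : ℝ → ℝ) (L : ℝ) (hL : 0 ≤ L)
    (hg : ∀ x, HasDerivAt g (g' x) x)
    (hlip : ∀ x y, |g' x - g' y| ≤ L * |x - y|)
    (x y : ℝ) : |g y - g x - g' x * (y - x)| ≤ L / 2 * (y - x) ^ 2 := by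
  have hc : Continuous g' := by
    have : LipschitzWith (Real.toNNReal L) g' := by
      apply LipschitzWith.of_dist_le_mul
      intro a b
      rw [Real.dist_eq, Real.dist_eq, Real.coe_toNNReal _ hL]
      exact hlip a b
    exact this.continuous
  have key : (∫ t in x..y, g' t) = g y - g x :=
    intervalIntegral.integral_eq_sub_of_hasDerivAt (fun t _ => hg t)
      (hc.intervalIntegrable x y)
  have hrepr : g y - g x - g' x * (y - x) = ∫ t in x..y, (g' t - g' x) := by
    rw [intervalIntegral.integral_sub (hc.intervalIntegrable x y)
      (intervalIntegrable_const), key, intervalIntegral.integral_const]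
    simp [smul_eq_mul]
    ring
  rw [hrepr]
  have hbound : ∀ᵐ t ∂(volume.restrict (Set.uIoc x y)),
      ‖g' t - g' x‖ ≤ L * |t - x| :=
    Filter.Eventually.of_forall fun t => by
      simpa [Real.norm_eq_abs] using hlip t x
  have hint : IntervalIntegrable (fun t => L * |t - x|) volume x y :=
    (continuous_const.mul ((continuous_id.sub continuous_const).abs)).intervalIntegrable x y
  have h1 := intervalIntegral.norm_integral_le_abs_of_norm_le hbound hint
  rw [Real.norm_eq_abs] at h1
  refine h1.trans ?_
  have h2 : (∫ t in x..y, L * |t - x|) = L * ((y - x) * |y - x| / 2) := by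
    rw [intervalIntegral.integral_const_mul]
    congr 1
    have := intervalIntegral.integral_comp_sub_right (a := x) (b := y)
      (fun s => |s|) x
    simp only [sub_self] at this
    rw [this, aux_integral_abs]
  rw [h2, abs_mul, abs_of_nonneg hL, abs_div, abs_mul, abs_abs, abs_two]
  rw [← sq_abs (y - x)]
  ring_nf
  exact le_refl _

noncomputable def E01 (x : ℝ) : ℝ := rexp (-(1/2) * x ^ 2)

lemma pdf01_eq (x : ℝ) : gaussianPDFReal 0 1 x = (Real.sqrt (2 * π))⁻¹ * E01 x := by
  rw [gaussianPDFReal, E01]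
  congr 1
  · norm_num
  · congr 1
    push_cast
    ring

lemma E01_int : Integrable E01 := integrable_exp_neg_mul_sq (by norm_num : (0:ℝ) < 1/2)

lemma rpow_nat_helper (x : ℝ) (n : ℕ) : x ^ (n : ℝ) = x ^ n := Real.rpow_natCast x n

lemma sq_mul_E01_int : Integrable (fun x => x ^ 2 * E01 x) := by
  have h := integrable_rpow_mul_exp_neg_mul_sq (by norm_num : (0:ℝ) < 1/2)
    (s := 2) (by norm_num)
  refine h.congr (Filter.Eventually.of_forall fun x => ?_)
  show x ^ (2:ℝ) * rexp (-(1/2) * x ^ 2) = x ^ 2 * E01 x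
  unfold E01
  congr 1
  rw [← Real.rpow_natCast x 2]
  norm_num

lemma cube_mul_E01_int : Integrable (fun x => |x| ^ 3 * E01 x) := by
  have h := integrable_rpow_mul_exp_neg_mul_sq (by norm_num : (0:ℝ) < 1/2)
    (s := 3) (by norm_num)
  have h' : Integrable (fun x : ℝ => x ^ 3 * E01 x) := by
    refine h.congr (Filter.Eventually.of_forall fun x => ?_)
    show x ^ (3:ℝ) * rexp (-(1/2) * x ^ 2) = x ^ 3 * E01 x
    unfold E01
    congr 1
    rw [← Real.rpow_natCast x 3]
    norm_num
  refine h'.abs.congr (Filter.Eventually.of_forall fun x => ?_)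
  show |x ^ 3 * E01 x| = |x| ^ 3 * E01 x
  have hE : 0 < E01 x := Real.exp_pos _
  rw [abs_mul, abs_pow, abs_of_pos hE]

lemma mul_E01_int : Integrable (fun x => x * E01 x) :=
  integrable_mul_exp_neg_mul_sq (by norm_num : (0:ℝ) < 1/2)

lemma integral_E01 : (∫ x, E01 x) = Real.sqrt (2 * π) := by
  rw [show (∫ x, E01 x) = ∫ x : ℝ, rexp (-(1/2) * x ^ 2) from rfl,
    integral_gaussian]
  congr 1
  rw [one_div, div_inv_eq_mul]
  ring

lemma integral_sq_mul_E01 : (∫ x, x ^ 2 * E01 x) = Real.sqrt (2 * π) := by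
  have hu : ∀ x : ℝ, HasDerivAt (fun y : ℝ => y) (1 : ℝ) x := fun x => hasDerivAt_id x
  have hv : ∀ x : ℝ, HasDerivAt (fun y : ℝ => -E01 y) (x * E01 x) x := by
    intro x
    have h1 : HasDerivAt (fun y : ℝ => -(1/2) * y ^ 2) (-x) x := by
      have := ((hasDerivAt_pow 2 x).const_mul (-(1/2) : ℝ))
      refine this.congr_deriv ?_
      push_cast
      ring
    have h2 := h1.exp
    have h3 := h2.neg
    refine HasDerivAt.congr_deriv (f := fun y => -E01 y) h3 ?_
    unfold E01
    ring
  have huv' : Integrable ((fun y : ℝ => y) * fun x => x * E01 x) := by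
    refine sq_mul_E01_int.congr (Filter.Eventually.of_forall fun x => ?_)
    simp [Pi.mul_apply]
    ring
  have hu'v : Integrable ((fun _ : ℝ => (1:ℝ)) * fun y => -E01 y) := by
    refine E01_int.neg.congr (Filter.Eventually.of_forall fun x => ?_)
    simp [Pi.mul_apply]
  have huv : Integrable ((fun y : ℝ => y) * fun y => -E01 y) := by
    refine mul_E01_int.neg.congr (Filter.Eventually.of_forall fun x => ?_)
    simp [Pi.mul_apply]
  have h := integral_mul_deriv_eq_deriv_mul_of_integrable (fun x _ => hu x) (fun x _ => hv x) huv' hu'v huv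
  have h2 : (∫ x : ℝ, x * (x * E01 x)) = ∫ x : ℝ, E01 x := by
    rw [h]
    rw [← integral_neg]
    congr 1
    ext x
    simp
  calc (∫ x, x ^ 2 * E01 x) = ∫ x : ℝ, x * (x * E01 x) := by
        congr 1; ext x; ring
    _ = ∫ x, E01 x := h2
    _ = Real.sqrt (2 * π) := integral_E01

lemma gaussianPDF01_eq :
    gaussianPDF 0 1 = fun x => ((Real.toNNReal (gaussianPDFReal 0 1 x) : ℝ≥0) : ℝ≥0∞) := rfl

lemma integral_gaussianReal01 (f : ℝ → ℝ) :
    (∫ u, f u ∂(gaussianReal 0 1)) = ∫ u, gaussianPDFReal 0 1 u * f u := by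
  rw [gaussianReal_of_var_ne_zero 0 one_ne_zero, gaussianPDF01_eq,
    integral_withDensity_eq_integral_smul
      ((measurable_gaussianPDFReal 0 1).real_toNNReal) f]
  refine integral_congr_ae (Filter.Eventually.of_forall fun x => ?_)
  simp [NNReal.smul_def, Real.coe_toNNReal _ (gaussianPDFReal_nonneg 0 1 x)]

lemma integrable_gaussianReal01 {f : ℝ → ℝ}
    (h : Integrable (fun x => gaussianPDFReal 0 1 x * f x)) :
    Integrable f (gaussianReal 0 1) := by
  rw [gaussianReal_of_var_ne_zero 0 one_ne_zero, gaussianPDF01_eq,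
    integrable_withDensity_iff_integrable_smul
      ((measurable_gaussianPDFReal 0 1).real_toNNReal)]
  refine h.congr (Filter.Eventually.of_forall fun x => ?_)
  simp [NNReal.smul_def, Real.coe_toNNReal _ (gaussianPDFReal_nonneg 0 1 x)]

lemma integrable_sq_gaussian : Integrable (fun u : ℝ => u ^ 2) (gaussianReal 0 1) := by
  apply integrable_gaussianReal01
  have : Integrable (fun x : ℝ => (Real.sqrt (2 * π))⁻¹ * (x ^ 2 * E01 x)) :=
    sq_mul_E01_int.const_mul _
  refine this.congr (Filter.Eventually.of_forall fun x => ?_)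
  show (Real.sqrt (2 * π))⁻¹ * (x ^ 2 * E01 x) = gaussianPDFReal 0 1 x * x ^ 2
  rw [pdf01_eq]
  ring

lemma integrable_cube_gaussian : Integrable (fun u : ℝ => |u| ^ 3) (gaussianReal 0 1) := by
  apply integrable_gaussianReal01
  have : Integrable (fun x : ℝ => (Real.sqrt (2 * π))⁻¹ * (|x| ^ 3 * E01 x)) :=
    cube_mul_E01_int.const_mul _
  refine this.congr (Filter.Eventually.of_forall fun x => ?_)
  show (Real.sqrt (2 * π))⁻¹ * (|x| ^ 3 * E01 x) = gaussianPDFReal 0 1 x * |x| ^ 3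
  rw [pdf01_eq]
  ring

lemma integral_sq_gaussian : (∫ u, u ^ 2 ∂(gaussianReal 0 1)) = 1 := by
  rw [integral_gaussianReal01]
  have h : (∫ u, gaussianPDFReal 0 1 u * u ^ 2)
      = (Real.sqrt (2 * π))⁻¹ * ∫ x, x ^ 2 * E01 x := by
    rw [← integral_const_mul]
    congr 1
    ext x
    rw [pdf01_eq]
    ring
  rw [h, integral_sq_mul_E01, inv_mul_cancel₀]
  positivity

end Aux

/-- Bias bound for the Gaussian-smoothed two-point gradient estimate of a
Lipschitz-smooth scalar function. -/
theorem stmt_12 (g g' : ℝ → ℝ) (L : ℝ) (hL : 0 ≤ L)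
    (hg : ∀ x, HasDerivAt g (g' x) x)
    (hlip : ∀ x y, |g' x - g' y| ≤ L * |x - y|)
    (θ μ : ℝ) (hμ : 0 < μ) :
    |(∫ u, ((g (θ + μ * u) - g (θ - μ * u)) / (2 * μ)) * u ∂(gaussianReal 0 1)) - g' θ| ≤
      (L * μ / 2) * ∫ u, |u| ^ 3 ∂(gaussianReal 0 1) := by
  set γ := gaussianReal 0 1
  set F : ℝ → ℝ := fun u => ((g (θ + μ * u) - g (θ - μ * u)) / (2 * μ)) * u with hF
  set c := g' θ with hc
  -- pointwise bound
  have hpt : ∀ u : ℝ, |F u - c * u ^ 2| ≤ (L * μ / 2) * |u| ^ 3 := by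
    intro u
    have ha := aux_taylor g g' L hL hg hlip θ (θ + μ * u)
    have hb := aux_taylor g g' L hL hg hlip θ (θ - μ * u)
    simp only [add_sub_cancel_left] at ha
    have hb' : |g (θ - μ * u) - g θ - g' θ * (-(μ * u))| ≤ L / 2 * (μ * u) ^ 2 := by
      have : θ - μ * u - θ = -(μ * u) := by ring
      rw [this] at hb
      simpa using hb
    have key : F u - c * u ^ 2 =
        ((g (θ + μ * u) - g θ - g' θ * (μ * u))
          - (g (θ - μ * u) - g θ - g' θ * (-(μ * u)))) * u / (2 * μ) := by
      rw [hF, hc]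
      field_simp
      ring
    rw [key]
    rw [abs_div, abs_mul]
    have h2μ : |2 * μ| = 2 * μ := abs_of_pos (by linarith)
    rw [h2μ]
    rw [div_le_iff₀ (by linarith : (0:ℝ) < 2 * μ)]
    have habs : |(g (θ + μ * u) - g θ - g' θ * (μ * u))
        - (g (θ - μ * u) - g θ - g' θ * (-(μ * u)))| ≤ L * (μ * u) ^ 2 := by
      refine (abs_sub _ _).trans ?_
      have := add_le_add ha hb'
      linarith
    calc |(g (θ + μ * u) - g θ - g' θ * (μ * u))
        - (g (θ - μ * u) - g θ - g' θ * (-(μ * u)))| * |u|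
        ≤ L * (μ * u) ^ 2 * |u| :=
          mul_le_mul_of_nonneg_right habs (abs_nonneg u)
      _ = (L * μ / 2) * |u| ^ 3 * (2 * μ) := by
          rw [show |u| ^ 3 = |u| ^ 2 * |u| by ring, sq_abs]
          ring
  -- integrability
  have hFcont : Continuous F := by
    have hgc : Continuous g := by
      rw [continuous_iff_continuousAt]
      exact fun x => (hg x).continuousAt
    apply Continuous.mul _ continuous_id
    apply Continuous.div_const
    exact ((hgc.comp (continuous_const.add (continuous_const.mul continuous_id))).sub
      (hgc.comp (continuous_const.sub (continuous_const.mul continuous_id))))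
  have hI3 : Integrable (fun u : ℝ => |u| ^ 3) γ := integrable_cube_gaussian
  have hIc : Integrable (fun u : ℝ => c * u ^ 2) γ := integrable_sq_gaussian.const_mul c
  have hI3' : Integrable (fun u : ℝ => (L * μ / 2) * |u| ^ 3) γ := hI3.const_mul _
  have hIdiff : Integrable (fun u => F u - c * u ^ 2) γ := by
    refine Integrable.mono' hI3' ?_ ?_
    · exact ((hFcont.sub (continuous_const.mul (continuous_pow 2))).aestronglyMeasurable)
    · exact Filter.Eventually.of_forall fun u => by
        simpa [Real.norm_eq_abs] using hpt u
  have hIF : Integrable F γ := by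
    have := hIdiff.add hIc
    refine this.congr (Filter.Eventually.of_forall fun u => ?_)
    simp
  -- assemble
  have hsplit : (∫ u, F u ∂γ) - c = ∫ u, (F u - c * u ^ 2) ∂γ := by
    rw [integral_sub hIF hIc, integral_const_mul, integral_sq_gaussian, mul_one]
  rw [hsplit]
  calc |∫ u, (F u - c * u ^ 2) ∂γ|
      ≤ ∫ u, |F u - c * u ^ 2| ∂γ := by
        simpa [Real.norm_eq_abs] using
          norm_integral_le_integral_norm (fun u => F u - c * u ^ 2) (μ := γ)
    _ ≤ ∫ u, (L * μ / 2) * |u| ^ 3 ∂γ := by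
        refine integral_mono hIdiff.abs hI3' fun u => hpt u
    _ = (L * μ / 2) * ∫ u, |u| ^ 3 ∂γ := integral_const_mul _ _
end

section
/- Fix a positive integer K, a : Fin K → ℂ, σ > 0, and k : Fin K. With MSE(u) = |1 − (conj u)·(a k)|² + ∑_{j ≠ k} |(conj u)·(a j)|² + σ²·|u|² and SINR = |a k|² / (∑_{j ≠ k} |a j|² + σ²), the achievable rate admits the variational representation Real.log (1 + SINR) = ⨆_{u ∈ ℂ} ⨆_{w > 0} (Real.log w − w·MSE(u) + 1); moreover the supremum is attained at u* = (a k)/(∑_j |a j|² + σ²) and w* = 1/MSE(u*). -/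
/-- Inner sup: for `e > 0`, `sup_{w>0} (log w - w e + 1) = -log e`. -/
lemma sup_w_eq (e : ℝ) (he : 0 < e) :
    (⨆ w : Set.Ioi (0 : ℝ), (Real.log w - (w : ℝ) * e + 1)) = -Real.log e := by
  have hne : Nonempty (Set.Ioi (0:ℝ)) := ⟨⟨1, by norm_num⟩⟩
  have hub : ∀ w : Set.Ioi (0:ℝ), Real.log w - (w:ℝ) * e + 1 ≤ -Real.log e := by
    rintro ⟨w, hw⟩
    simp only [Set.mem_Ioi] at hw
    have h1 : Real.log (w * e) ≤ w * e - 1 := Real.log_le_sub_one_of_pos (mul_pos hw he)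
    have h2 : Real.log (w * e) = Real.log w + Real.log e := Real.log_mul (ne_of_gt hw) (ne_of_gt he)
    simp only
    linarith
  apply le_antisymm
  · exact ciSup_le hub
  · have hmem : (1/e : ℝ) ∈ Set.Ioi (0:ℝ) := by simp [he]
    have := le_ciSup ⟨-Real.log e, Set.forall_mem_range.2 hub⟩ (⟨1/e, hmem⟩ : Set.Ioi (0:ℝ))
    have hval : Real.log ((1:ℝ)/e) - (1/e) * e + 1 = -Real.log e := by
      rw [one_div, Real.log_inv, inv_mul_cancel₀ (ne_of_gt he)]; ring
    exact le_of_eq_of_le hval.symm this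

/-- The rate–WMMSE variational representation:
`log(1 + SINR) = sup_{u ∈ ℂ} sup_{w > 0} (log w − w·MSE(u) + 1)`,
attained at `u* = a_k/(∑ j |a j|² + σ²)` and `w* = 1/MSE(u*)`. -/
theorem stmt_15 (K : ℕ) (hK : 0 < K) (a : Fin K → ℂ) (σ : ℝ) (hσ : 0 < σ) (k : Fin K)
    (MSE : ℂ → ℝ)
    (hMSE : ∀ u : ℂ, MSE u =
      ‖1 - (starRingEnd ℂ u) * a k‖ ^ 2 +
        (∑ j ∈ Finset.univ.erase k, ‖(starRingEnd ℂ u) * a j‖ ^ 2) +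
        σ ^ 2 * ‖u‖ ^ 2)
    (SINR : ℝ)
    (hSINR : SINR =
      ‖a k‖ ^ 2 / ((∑ j ∈ Finset.univ.erase k, ‖a j‖ ^ 2) + σ ^ 2))
    (ustar : ℂ)
    (hustar : ustar = a k / ((((∑ j, ‖a j‖ ^ 2) + σ ^ 2) : ℝ) : ℂ)) :
    Real.log (1 + SINR) =
      (⨆ u : ℂ, ⨆ w : Set.Ioi (0 : ℝ), (Real.log w - (w : ℝ) * MSE u + 1)) ∧
    Real.log (1 / MSE ustar) - (1 / MSE ustar) * MSE ustar + 1 = Real.log (1 + SINR) := by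
  set S : ℝ := Complex.normSq (a k) with hS
  set I : ℝ := ∑ j ∈ Finset.univ.erase k, Complex.normSq (a j) with hI
  set Q : ℝ := I + σ ^ 2 with hQ
  set T : ℝ := S + Q with hT
  have hS0 : 0 ≤ S := Complex.normSq_nonneg _
  have hI0 : 0 ≤ I := Finset.sum_nonneg fun j _ => Complex.normSq_nonneg _
  have hQ0 : 0 < Q := by positivity
  have hT0 : 0 < T := by positivity
  -- identify coercions of abs² with normSq
  have habs : ∀ z : ℂ, ‖z‖ ^ 2 = Complex.normSq z := fun z => Complex.sq_norm z
  have hTsum : ((∑ j, ‖a j‖ ^ 2) + σ ^ 2 : ℝ) = T := by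
    have : (∑ j, ‖a j‖ ^ 2) = S + I := by
      simp only [habs, hS, hI]
      exact (Finset.add_sum_erase Finset.univ _ (Finset.mem_univ k)).symm
    rw [this, hT, hQ]; ring
  have hustar' : ustar = a k / (T : ℂ) := by rw [hustar, hTsum]
  -- key identity: MSE u = T * normSq (u - ustar) + Q / T
  have hkey : ∀ u : ℂ, MSE u = T * Complex.normSq (u - ustar) + Q / T := by
    intro u
    rw [hMSE u]
    simp only [habs]
    simp only [map_mul, Complex.normSq_conj]
    rw [← Finset.mul_sum, ← hI]
    have e1 : Complex.normSq (1 - (starRingEnd ℂ u) * a k)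
        = 1 - 2 * (u * (starRingEnd ℂ (a k))).re + Complex.normSq u * S := by
      rw [Complex.normSq_sub]
      have : ((1:ℂ) * (starRingEnd ℂ ((starRingEnd ℂ u) * a k))).re
          = (u * (starRingEnd ℂ (a k))).re := by
        simp [mul_comm]
      rw [this]
      simp [map_mul, Complex.normSq_conj, hS]
      ring
    have e2 : Complex.normSq (u - ustar)
        = Complex.normSq u - 2 * (u * (starRingEnd ℂ (a k))).re / T + S / T ^ 2 := by
      rw [hustar', Complex.normSq_sub]
      have c1 : (starRingEnd ℂ) (a k / (T:ℂ)) = (starRingEnd ℂ) (a k) / (T:ℂ) := by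
        rw [map_div₀, Complex.conj_ofReal]
      have c2 : (u * ((starRingEnd ℂ) (a k) / (T:ℂ))).re = (u * (starRingEnd ℂ) (a k)).re / T := by
        rw [mul_div_assoc', Complex.div_ofReal_re]
      rw [c1, c2, Complex.normSq_div, Complex.normSq_ofReal, ← hS]
      ring
    rw [e1, e2]
    field_simp
    ring
  have hMSEstar : MSE ustar = Q / T := by
    rw [hkey ustar]; simp
  have hMSEpos : ∀ u : ℂ, 0 < MSE u := by
    intro u
    rw [hkey u]
    have := Complex.normSq_nonneg (u - ustar)
    have := div_pos hQ0 hT0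
    nlinarith
  have hMSEge : ∀ u : ℂ, Q / T ≤ MSE u := by
    intro u
    rw [hkey u]
    nlinarith [Complex.normSq_nonneg (u - ustar)]
  -- log(1+SINR) = -log(Q/T)
  have hSINR' : 1 + SINR = T / Q := by
    rw [hSINR]
    have : (∑ j ∈ Finset.univ.erase k, ‖a j‖ ^ 2) = I := by
      simp only [habs, hI]
    rw [this, habs, ← hS, ← hQ]
    field_simp [hT]
    ring
  have hlog : Real.log (1 + SINR) = -Real.log (Q / T) := by
    rw [hSINR', Real.log_div (ne_of_gt hT0) (ne_of_gt hQ0),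
      Real.log_div (ne_of_gt hQ0) (ne_of_gt hT0)]
    ring
  constructor
  · -- the variational representation
    have hinner : ∀ u : ℂ,
        (⨆ w : Set.Ioi (0 : ℝ), (Real.log w - (w : ℝ) * MSE u + 1)) = -Real.log (MSE u) :=
      fun u => sup_w_eq (MSE u) (hMSEpos u)
    have : (⨆ u : ℂ, ⨆ w : Set.Ioi (0 : ℝ), (Real.log w - (w : ℝ) * MSE u + 1))
        = ⨆ u : ℂ, -Real.log (MSE u) := by
      exact iSup_congr hinner
    rw [this, hlog]
    have hub : ∀ u : ℂ, -Real.log (MSE u) ≤ -Real.log (Q / T) := by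
      intro u
      have := Real.log_le_log (div_pos hQ0 hT0) (hMSEge u)
      linarith
    apply le_antisymm
    · have := le_ciSup ⟨-Real.log (Q / T), Set.forall_mem_range.2 hub⟩ ustar
      rw [hMSEstar] at this
      exact this
    · exact ciSup_le hub
  · rw [hMSEstar, hlog, Real.log_div one_ne_zero (ne_of_gt (div_pos hQ0 hT0)),
      one_div_mul_cancel (ne_of_gt (div_pos hQ0 hT0)), Real.log_one]
    ring
end
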